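/- Let Σ₀, Σ_l ∈ ℝ^{d×d} be symmetric positive definite and n ≥ 1. Then every eigenvalue of the matrix A := n(Σ₀⁻¹ + nΣ_l⁻¹)⁻¹Σ_l⁻¹ ∈ ℝ^{d×d} is real and lies in the open interval (0, 1). Consequently, for any B ∈ ℝ^{d×d} the Lyapunov equation A X Aᵀ − X + B = 0 has a unique solution X ∈ ℝ^{d×d}. -/

import Mathlib

open Matrix

lemma auxSymmApply {d : ℕ} {M : Matrix (Fin d) (Fin d) ℝ} (h : M.IsHermitian) (i j : Fin d) :
    M j i = M i j := by
  have := congrFun (congrFun h j) i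
  simpa [Matrix.conjTranspose_apply] using this.symm

lemma auxPosDefSmul {d : ℕ} {M : Matrix (Fin d) (Fin d) ℝ} (hM : M.PosDef) {c : ℝ} (hc : 0 < c) :
    (c • M).PosDef := by
  refine Matrix.PosDef.of_dotProduct_mulVec_pos ?_ (fun x hx => ?_)
  · ext i j
    simp [Matrix.conjTranspose_apply, Matrix.smul_apply, auxSymmApply hM.1 i j]
  · rw [smul_mulVec, dotProduct_smul, smul_eq_mul]
    exact mul_pos hc (hM.dotProduct_mulVec_pos hx)

lemma auxPosDefConj {d : ℕ} {N B : Matrix (Fin d) (Fin d) ℝ} (hN : N.PosDef) (hB : IsUnit B) :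
    (Bᴴ * N * B).PosDef := by
  refine Matrix.PosDef.of_dotProduct_mulVec_pos (Matrix.isHermitian_conjTranspose_mul_mul B hN.1) (fun x hx => ?_)
  have hinj := Matrix.mulVec_injective_iff_isUnit.mpr hB
  have hBx : B *ᵥ x ≠ 0 := fun h => hx (hinj (by rw [h, Matrix.mulVec_zero]))
  simpa only [star_mulVec, dotProduct_mulVec, vecMul_vecMul] using hN.dotProduct_mulVec_pos hBx

lemma auxSpecBound {d : ℕ} {S : Matrix (Fin d) (Fin d) ℝ} (hS : S.PosDef)
    (hS' : ((1 : Matrix (Fin d) (Fin d) ℝ) - S).PosDef) {t : ℝ}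
    (hdet : (t • (1 : Matrix (Fin d) (Fin d) ℝ) - S).det = 0) : 0 < t ∧ t < 1 := by
  obtain ⟨w, hw0, hw⟩ := Matrix.exists_mulVec_eq_zero_iff.mpr hdet
  have hSw : S *ᵥ w = t • w := by
    have h := hw
    rw [sub_mulVec, smul_mulVec, one_mulVec, sub_eq_zero] at h
    exact h.symm
  have h1 := hS.dotProduct_mulVec_pos hw0
  have h2 := hS'.dotProduct_mulVec_pos hw0
  rw [hSw] at h1
  rw [sub_mulVec, one_mulVec, hSw] at h2
  have hsw : star w = w := by funext i; exact star_trivial _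
  rw [hsw, dotProduct_smul, smul_eq_mul] at h1
  rw [hsw, dotProduct_sub, dotProduct_smul, smul_eq_mul] at h2
  have ha : 0 ≤ w ⬝ᵥ w := by
    classical
    simpa [dotProduct] using
      Finset.sum_nonneg (fun i (_ : i ∈ Finset.univ) => mul_self_nonneg (w i))
  constructor <;> nlinarith [h1, h2, ha]

lemma auxCSpec {d : ℕ} {S : Matrix (Fin d) (Fin d) ℝ} (hS : S.PosDef)
    (hS' : ((1 : Matrix (Fin d) (Fin d) ℝ) - S).PosDef) {μ : ℂ}
    (hμ : μ ∈ spectrum ℂ (S.map (fun x : ℝ => (x : ℂ)))) :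
    μ.im = 0 ∧ 0 < μ.re ∧ μ.re < 1 := by
  have hHerm : (S.map (fun x : ℝ => (x : ℂ))).IsHermitian := by
    ext i j
    simp [Matrix.conjTranspose_apply, Matrix.map_apply, auxSymmApply hS.1 i j]
  have hspec : spectrum ℂ (S.map (fun x : ℝ => (x : ℂ)))
      = Set.range ((fun x : ℝ => (x : ℂ)) ∘ hHerm.eigenvalues) := by
    conv_lhs => rw [hHerm.spectral_theorem, Unitary.conjStarAlgAut_apply, Unitary.spectrum_star_right_conjugate]
    rw [spectrum_diagonal]
    rfl
  rw [hspec] at hμ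
  obtain ⟨i, hi⟩ := hμ
  set t := hHerm.eigenvalues i with ht
  have hμt : μ = (t : ℂ) := hi.symm
  have hdetC : ((t • (1 : Matrix (Fin d) (Fin d) ℝ) - S).map (fun x : ℝ => (x : ℂ))).det = 0 := by
    have hnonunit : ¬ IsUnit ((algebraMap ℂ (Matrix (Fin d) (Fin d) ℂ)) μ
        - S.map (fun x : ℝ => (x : ℂ))) := spectrum.mem_iff.mp (by rw [hspec]; exact ⟨i, hi⟩)
    have heq : (algebraMap ℂ (Matrix (Fin d) (Fin d) ℂ)) μ - S.map (fun x : ℝ => (x : ℂ))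
        = (t • (1 : Matrix (Fin d) (Fin d) ℝ) - S).map (fun x : ℝ => (x : ℂ)) := by
      ext i j
      simp [Algebra.algebraMap_eq_smul_one, Matrix.map_apply, Matrix.sub_apply,
        Matrix.smul_apply, Matrix.one_apply, hμt, apply_ite, smul_eq_mul]
    by_contra hne
    exact hnonunit (heq ▸ (Matrix.isUnit_iff_isUnit_det _).2 (isUnit_iff_ne_zero.2 hne))
  have hdetR : (t • (1 : Matrix (Fin d) (Fin d) ℝ) - S).det = 0 := by
    have h2 : ((t • (1 : Matrix (Fin d) (Fin d) ℝ) - S).map ⇑(algebraMap ℝ ℂ)).det = 0 := by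
      have : (fun x : ℝ => (x : ℂ)) = ⇑(algebraMap ℝ ℂ) := by funext x; simp
      rwa [this] at hdetC
    have h3 := RingHom.map_det (algebraMap ℝ ℂ) (t • (1 : Matrix (Fin d) (Fin d) ℝ) - S)
    rw [RingHom.mapMatrix_apply] at h3
    rw [← h3] at h2
    simpa using h2
  obtain ⟨h0, h1⟩ := auxSpecBound hS hS' hdetR
  rw [hμt]
  simp [h0, h1]


/-- Every eigenvalue of `A = n(Σ₀⁻¹ + nΣ_l⁻¹)⁻¹Σ_l⁻¹` is real and lies in
`(0, 1)`; consequently, for any `B` the discrete Lyapunov equation `AXAᵀ − X + B = 0`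
has a unique solution. -/
theorem gibbs_mean_map_spectrum_and_lyapunov
    {d : ℕ} (S0 Sl : Matrix (Fin d) (Fin d) ℝ)
    (hS0 : S0.PosDef) (hSl : Sl.PosDef)
    (n : ℕ) (hn : 1 ≤ n)
    (A : Matrix (Fin d) (Fin d) ℝ)
    (hA : A = (n : ℝ) • ((S0⁻¹ + (n : ℝ) • Sl⁻¹)⁻¹ * Sl⁻¹)) :
    (∀ μ : ℂ, μ ∈ spectrum ℂ (A.map (fun x : ℝ => (x : ℂ))) →
        μ.im = 0 ∧ 0 < μ.re ∧ μ.re < 1) ∧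
    ∀ B : Matrix (Fin d) (Fin d) ℝ,
      ∃! X : Matrix (Fin d) (Fin d) ℝ, A * X * Aᵀ - X + B = 0 := by
  have hnpos : (0:ℝ) < (n:ℝ) := by exact_mod_cast Nat.lt_of_lt_of_le Nat.zero_lt_one hn
  set N : Matrix (Fin d) (Fin d) ℝ := (n : ℝ) • Sl⁻¹ with hNdef
  have hNpos : N.PosDef := auxPosDefSmul hSl.inv hnpos
  set M : Matrix (Fin d) (Fin d) ℝ := S0⁻¹ + N with hMdef
  have hMpos : M.PosDef := hS0.inv.add hNpos
  set P := (open scoped MatrixOrder in CFC.sqrt M) with hPdef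
  have hPherm : P.IsHermitian := (open scoped MatrixOrder in (Matrix.nonneg_iff_posSemidef.mp (CFC.sqrt_nonneg M)).1)
  have hPP : P * P = M := (open scoped MatrixOrder in CFC.sqrt_mul_sqrt_self M (Matrix.nonneg_iff_posSemidef.mpr hMpos.posSemidef))
  have hPdet : IsUnit P.det := by
    have hMdet := hMpos.det_pos
    rw [← hPP, det_mul] at hMdet
    have h0 : P.det ≠ 0 := fun h => by simp [h] at hMdet
    exact h0.isUnit
  have hPunit : IsUnit P := (Matrix.isUnit_iff_isUnit_det P).2 hPdet
  have hPinvP : P⁻¹ * P = 1 := Matrix.nonsing_inv_mul P hPdet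
  have hPPinv : P * P⁻¹ = 1 := Matrix.mul_nonsing_inv P hPdet
  have hPinvherm : P⁻¹.IsHermitian := hPherm.inv
  set S := P⁻¹ * N * P⁻¹ with hSdef
  have hSpos : S.PosDef := by
    have h := auxPosDefConj hNpos (Matrix.isUnit_nonsing_inv_iff.2 hPunit)
    rwa [(hPinvherm : P⁻¹ᴴ = P⁻¹)] at h
  have hSherm := hSpos.1
  have hPMP : P⁻¹ * M * P⁻¹ = 1 := by
    rw [← hPP]
    calc P⁻¹ * (P * P) * P⁻¹ = (P⁻¹ * P) * (P * P⁻¹) := by simp only [Matrix.mul_assoc]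
    _ = 1 := by rw [hPinvP, hPPinv, one_mul]
  have hA2 : A = P⁻¹ * S * P := by
    have h2 : P⁻¹ * S * P = M⁻¹ * N := by
      rw [hSdef]
      calc P⁻¹ * (P⁻¹ * N * P⁻¹) * P = (P⁻¹ * P⁻¹) * N * (P⁻¹ * P) := by
            simp only [Matrix.mul_assoc]
      _ = (P * P)⁻¹ * N * 1 := by rw [Matrix.mul_inv_rev, hPinvP]
      _ = M⁻¹ * N := by rw [hPP, Matrix.mul_one]
    rw [hA, h2, hNdef, Matrix.mul_smul]
  have h1mS : (1 : Matrix (Fin d) (Fin d) ℝ) - S = P⁻¹ * S0⁻¹ * P⁻¹ := by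
    have hadd : P⁻¹ * S0⁻¹ * P⁻¹ + S = 1 := by
      rw [hSdef]
      have h3 : P⁻¹ * S0⁻¹ * P⁻¹ + P⁻¹ * N * P⁻¹ = P⁻¹ * M * P⁻¹ := by
        rw [hMdef, Matrix.mul_add, Matrix.add_mul]
      rw [h3, hPMP]
    have := eq_sub_of_add_eq hadd
    exact this.symm
  have h1mSpos : ((1 : Matrix (Fin d) (Fin d) ℝ) - S).PosDef := by
    rw [h1mS]
    have h := auxPosDefConj hS0.inv (Matrix.isUnit_nonsing_inv_iff.2 hPunit)
    rwa [(hPinvherm : P⁻¹ᴴ = P⁻¹)] at h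
  have hPA : P * A = S * P := by
    rw [hA2]
    calc P * (P⁻¹ * S * P) = (P * P⁻¹) * (S * P) := by simp only [Matrix.mul_assoc]
    _ = S * P := by rw [hPPinv, one_mul]
  constructor
  · -- spectrum part
    intro μ hμ
    have hcoe : (fun x : ℝ => (x : ℂ)) = ⇑(algebraMap ℝ ℂ) := by funext x; simp
    set f := algebraMap ℝ ℂ with hf
    have hPcdet : IsUnit ((P.map ⇑f).det) := by
      have h3 := RingHom.map_det f P
      rw [RingHom.mapMatrix_apply] at h3
      rw [← h3]
      exact hPdet.map f
    have hPcunit : IsUnit (P.map ⇑f) := (Matrix.isUnit_iff_isUnit_det _).2 hPcdet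
    have hm : (P.map ⇑f) * (A.map ⇑f) = (S.map ⇑f) * (P.map ⇑f) := by
      rw [← Matrix.map_mul, ← Matrix.map_mul, hPA]
    have hAc : A.map ⇑f = (P.map ⇑f)⁻¹ * (S.map ⇑f) * (P.map ⇑f) := by
      calc A.map ⇑f = ((P.map ⇑f)⁻¹ * (P.map ⇑f)) * A.map ⇑f := by
            rw [Matrix.nonsing_inv_mul _ hPcdet, one_mul]
      _ = (P.map ⇑f)⁻¹ * ((P.map ⇑f) * (A.map ⇑f)) := by rw [Matrix.mul_assoc]
      _ = (P.map ⇑f)⁻¹ * ((S.map ⇑f) * (P.map ⇑f)) := by rw [hm]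
      _ = (P.map ⇑f)⁻¹ * (S.map ⇑f) * (P.map ⇑f) := by rw [Matrix.mul_assoc]
    have hAc' : A.map ⇑f = (↑(hPcunit.unit⁻¹) : Matrix (Fin d) (Fin d) ℂ) * (S.map ⇑f) * (↑hPcunit.unit : Matrix (Fin d) (Fin d) ℂ) := by
      rw [Matrix.coe_units_inv, hPcunit.unit_spec]
      exact hAc
    have hspeceq : spectrum ℂ (A.map ⇑f) = spectrum ℂ (S.map ⇑f) := by
      rw [hAc']
      exact spectrum.units_conjugate'
    apply auxCSpec hSpos h1mSpos
    rw [hcoe] at hμ ⊢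
    rw [hspeceq] at hμ
    exact hμ
  · -- Lyapunov part
    intro B
    have hSt : Sᵀ = S := by
      rw [← Matrix.conjTranspose_eq_transpose_of_trivial, hSherm.eq]
    have hPt : Pᵀ = P := by
      rw [← Matrix.conjTranspose_eq_transpose_of_trivial, hPherm.eq]
    have hPit : (P⁻¹)ᵀ = P⁻¹ := by
      rw [← Matrix.conjTranspose_eq_transpose_of_trivial, hPinvherm.eq]
    have hATP : Aᵀ * P = P * S := by
      calc Aᵀ * P = Aᵀ * Pᵀ := by rw [hPt]
      _ = (P * A)ᵀ := (Matrix.transpose_mul P A).symm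
      _ = (S * P)ᵀ := by rw [hPA]
      _ = Pᵀ * Sᵀ := Matrix.transpose_mul S P
      _ = P * S := by rw [hPt, hSt]
    -- key injectivity fact
    have key : ∀ X : Matrix (Fin d) (Fin d) ℝ, X = A * X * Aᵀ → X = 0 := by
      intro X hX
      have hY : P * X * P = S * (P * X * P) * S := by
        conv_lhs => rw [hX]
        calc P * (A * X * Aᵀ) * P = (P * A) * X * (Aᵀ * P) := by simp only [Matrix.mul_assoc]
        _ = (S * P) * X * (P * S) := by rw [hPA, hATP]
        _ = S * (P * X * P) * S := by simp only [Matrix.mul_assoc]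
      set U : Matrix (Fin d) (Fin d) ℝ := (hSherm.eigenvectorUnitary : Matrix (Fin d) (Fin d) ℝ)
        with hU
      have hU2 : U * star U = 1 := Matrix.mem_unitaryGroup_iff.mp hSherm.eigenvectorUnitary.2
      have hU1 : star U * U = 1 := Matrix.mem_unitaryGroup_iff'.mp hSherm.eigenvectorUnitary.2
      set ev := hSherm.eigenvalues with hev
      have hofReal : (RCLike.ofReal ∘ ev : Fin d → ℝ) = ev := by
        funext i; simp [RCLike.ofReal]
      have hSdiag : S = U * Matrix.diagonal ev * star U := by
        have := hSherm.spectral_theorem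
        rwa [hofReal, Unitary.conjStarAlgAut_apply] at this
      have e1 : star U * S = Matrix.diagonal ev * star U := by
        rw [hSdiag]
        calc star U * (U * Matrix.diagonal ev * star U)
            = (star U * U) * (Matrix.diagonal ev * star U) := by simp only [Matrix.mul_assoc]
        _ = Matrix.diagonal ev * star U := by rw [hU1, one_mul]
      have e2 : S * U = U * Matrix.diagonal ev := by
        rw [hSdiag]
        calc U * Matrix.diagonal ev * star U * U
            = U * Matrix.diagonal ev * (star U * U) := by rw [Matrix.mul_assoc]
        _ = U * Matrix.diagonal ev := by rw [hU1, Matrix.mul_one]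
      set Z := star U * (P * X * P) * U with hZ
      have hZD : Z = Matrix.diagonal ev * Z * Matrix.diagonal ev := by
        calc Z = star U * (S * (P * X * P) * S) * U := by rw [hZ, ← hY]
        _ = (star U * S) * (P * X * P) * (S * U) := by simp only [Matrix.mul_assoc]
        _ = (Matrix.diagonal ev * star U) * (P * X * P) * (U * Matrix.diagonal ev) := by
              rw [e1, e2]
        _ = Matrix.diagonal ev * Z * Matrix.diagonal ev := by
              rw [hZ]; simp only [Matrix.mul_assoc]
      have hevb : ∀ k, 0 < ev k ∧ ev k < 1 := by
        intro k
        have hk : ev k ∈ spectrum ℝ S := hSherm.eigenvalues_mem_spectrum_real k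
        rw [spectrum.mem_iff] at hk
        have hdet0 : (ev k • (1 : Matrix (Fin d) (Fin d) ℝ) - S).det = 0 := by
          by_contra hne
          apply hk
          have h4 : IsUnit (ev k • (1 : Matrix (Fin d) (Fin d) ℝ) - S) :=
            (Matrix.isUnit_iff_isUnit_det _).2 (isUnit_iff_ne_zero.2 hne)
          rwa [Algebra.algebraMap_eq_smul_one]
        exact auxSpecBound hSpos h1mSpos hdet0
      have hZ0 : Z = 0 := by
        ext i j
        have h := congrFun (congrFun hZD i) j
        have hent : (Matrix.diagonal ev * Z * Matrix.diagonal ev) i j = ev i * Z i j * ev j := by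
          rw [Matrix.mul_diagonal, Matrix.diagonal_mul]
        rw [hent] at h
        have hi := hevb i
        have hj := hevb j
        have hlt : ev i * ev j < 1 := by nlinarith [hi.1, hi.2, hj.1, hj.2]
        have hz : Z i j * (1 - ev i * ev j) = 0 := by nlinarith [h]
        have hne : (1 - ev i * ev j) ≠ 0 := by linarith
        simpa [Matrix.zero_apply] using (mul_eq_zero.mp hz).resolve_right hne
      have hYzero : P * X * P = 0 := by
        have h5 : U * Z * star U = P * X * P := by
          rw [hZ]
          calc U * (star U * (P * X * P) * U) * star U
              = (U * star U) * (P * X * P) * (U * star U) := by simp only [Matrix.mul_assoc]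
          _ = P * X * P := by rw [hU2, one_mul, Matrix.mul_one]
        rw [← h5, hZ0, Matrix.mul_zero, Matrix.zero_mul]
      have h6 : P⁻¹ * (P * X * P) * P⁻¹ = X := by
        calc P⁻¹ * (P * X * P) * P⁻¹ = (P⁻¹ * P) * X * (P * P⁻¹) := by
              simp only [Matrix.mul_assoc]
        _ = X := by rw [hPinvP, hPPinv, one_mul, Matrix.mul_one]
      rw [← h6, hYzero, Matrix.mul_zero, Matrix.zero_mul]
    -- the Lyapunov linear map
    let L : Matrix (Fin d) (Fin d) ℝ →ₗ[ℝ] Matrix (Fin d) (Fin d) ℝ :=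
      { toFun := fun X => X - A * X * Aᵀ
        map_add' := fun X Y => by
          simp only [Matrix.mul_add, Matrix.add_mul]
          abel
        map_smul' := fun c X => by
          simp only [Matrix.mul_smul, Matrix.smul_mul, smul_sub, RingHom.id_apply] }
    have hLapply : ∀ X, L X = X - A * X * Aᵀ := fun X => rfl
    have hLinj : Function.Injective L := by
      intro X Y h
      have h0 : L (X - Y) = 0 := by rw [map_sub, h, sub_self]
      rw [hLapply] at h0
      have h1 : X - Y = A * (X - Y) * Aᵀ := sub_eq_zero.mp h0
      have h2 := key (X - Y) h1
      exact sub_eq_zero.mp h2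
    have hLsurj : Function.Surjective L := LinearMap.injective_iff_surjective.mp hLinj
    obtain ⟨X, hX⟩ := hLsurj B
    rw [hLapply] at hX
    refine ⟨X, ?_, ?_⟩
    · rw [← hX]
      abel
    · intro Y hY
      apply hLinj
      rw [hLapply, hLapply, hX]
      calc Y - A * Y * Aᵀ = -(A * Y * Aᵀ - Y) := (neg_sub _ _).symm
      _ = -(-B) := by rw [add_eq_zero_iff_eq_neg.mp hY]
      _ = B := neg_neg B
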